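/- For A = (a b; c d) ∈ SL(2,ℝ) and τ = τ_1 + iτ_2 in the upper half-plane, define an action on t ∈ ℂP¹ by A·t = (c τ_2 + (c τ_1 + d + |cτ+d|) t) / (c τ_1 + d + |cτ+d| - c τ_2 t), where SL(2,ℝ) simultaneously acts on τ by Möbius transformations. Under the Cayley transform z = (t+i)/(t-i), this action becomes A·z = ((c τ̄ + d)/|cτ+d|) · z, and consequently the formula defines an action of SL(2,ℝ) on the product of the upper half-plane with ℂP¹: (A·B)·(τ,t) = A·(B·(τ,t)). -/

import Mathlib

open UpperHalfPlane Complex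

set_option synthInstance.maxHeartbeats 1000000
set_option maxHeartbeats 1000000

noncomputable section

/-- the unit complex number `e(A,τ) = (c τ̄ + d)/|cτ+d|`. -/
def eFactor (A : Matrix.SpecialLinearGroup (Fin 2) ℝ) (τ : UpperHalfPlane) : ℂ :=
  ((A.1 1 0 : ℂ) * (starRingEnd ℂ) (τ : ℂ) + (A.1 1 1 : ℂ)) /
    (‖(A.1 1 0 : ℂ) * (τ : ℂ) + (A.1 1 1 : ℂ)‖ : ℂ)

/-- the lifted S-duality action on the twistor fiber coordinate `t`:
`A·t = (c τ₂ + (c τ₁ + d + |cτ+d|) t)/(c τ₁ + d + |cτ+d| - c τ₂ t)`. -/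
def tAct (A : Matrix.SpecialLinearGroup (Fin 2) ℝ) (τ : UpperHalfPlane) (t : ℂ) : ℂ :=
  ((A.1 1 0 * τ.im : ℝ) + ((A.1 1 0 * τ.re + A.1 1 1 +
      ‖(A.1 1 0 : ℂ) * (τ : ℂ) + (A.1 1 1 : ℂ)‖ : ℝ) : ℂ) * t) /
  (((A.1 1 0 * τ.re + A.1 1 1 +
      ‖(A.1 1 0 : ℂ) * (τ : ℂ) + (A.1 1 1 : ℂ)‖ : ℝ) : ℂ)
    - (A.1 1 0 * τ.im : ℝ) * t)

open MatrixGroups in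
private lemma denom_sl (A : Matrix.SpecialLinearGroup (Fin 2) ℝ) (τ : UpperHalfPlane) :
    UpperHalfPlane.denom (A : GL(2, ℝ)⁺) τ = (A.1 1 0 : ℂ) * (τ : ℂ) + (A.1 1 1 : ℂ) := by
  simp [UpperHalfPlane.denom, Matrix.SpecialLinearGroup.coe_GLPos_coe_GL_coe_matrix]

open MatrixGroups in
private lemma eFactor_eq (A : Matrix.SpecialLinearGroup (Fin 2) ℝ) (τ : UpperHalfPlane) :
    eFactor A τ = (starRingEnd ℂ) (UpperHalfPlane.denom (A : GL(2, ℝ)⁺) τ) /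
      (‖UpperHalfPlane.denom (A : GL(2, ℝ)⁺) τ‖ : ℂ) := by
  rw [eFactor, denom_sl]
  simp [map_add, map_mul, Complex.conj_ofReal]

open MatrixGroups in
private lemma eFactor_abs (A : Matrix.SpecialLinearGroup (Fin 2) ℝ) (τ : UpperHalfPlane) :
    ‖eFactor A τ‖ = 1 := by
  rw [eFactor_eq, norm_div, Complex.norm_conj, Complex.norm_real, norm_norm,
    div_self (norm_ne_zero_iff.mpr
      (UpperHalfPlane.denom_ne_zero _ _))]

open MatrixGroups in
private lemma eFactor_cocycle (A B : Matrix.SpecialLinearGroup (Fin 2) ℝ)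
    (τ : UpperHalfPlane) :
    eFactor (A * B) τ = eFactor A (B • τ) * eFactor B τ := by
  have hc : ((A * B : Matrix.SpecialLinearGroup (Fin 2) ℝ) : GL(2, ℝ)⁺)
      = (A : GL(2, ℝ)⁺) * (B : GL(2, ℝ)⁺) := map_mul _ _ _
  have hs : B • τ = (B : GL(2, ℝ)⁺) • τ := rfl
  have hd : UpperHalfPlane.denom (((A * B : Matrix.SpecialLinearGroup (Fin 2) ℝ)) : GL(2, ℝ)⁺) τ
      = UpperHalfPlane.denom (A : GL(2, ℝ)⁺) ((B • τ : UpperHalfPlane) : ℂ) *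
        UpperHalfPlane.denom (B : GL(2, ℝ)⁺) τ := by
    rw [hc, hs]
    rw [Subgroup.coe_mul, UpperHalfPlane.denom_cocycle_σ]
    congr 1
    simp [UpperHalfPlane.σ]
    rfl
  rw [eFactor_eq, eFactor_eq, eFactor_eq, hd, map_mul, norm_mul, Complex.ofReal_mul,
    div_mul_div_comm]

private lemma cayley_key (u E r : ℂ) (hr2 : r ^ 2 = u ^ 2 + E ^ 2) (hr : r ≠ 0)
    (hDE : (u + r) + Complex.I * E ≠ 0) :
    ((u + r) - Complex.I * E) / ((u + r) + Complex.I * E) = (u - E * Complex.I) / r := by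
  rw [div_eq_div_iff hDE hr]
  linear_combination hr2 + E ^ 2 * Complex.I_sq

theorem stmt_3 :
    (∀ (A : Matrix.SpecialLinearGroup (Fin 2) ℝ) (τ : UpperHalfPlane),
      ‖eFactor A τ‖ = 1) ∧
    (∀ (A B : Matrix.SpecialLinearGroup (Fin 2) ℝ) (τ : UpperHalfPlane),
      eFactor (A * B) τ = eFactor A (B • τ) * eFactor B τ) ∧
    (∀ (A : Matrix.SpecialLinearGroup (Fin 2) ℝ) (τ : UpperHalfPlane) (t : ℂ),
      t ≠ Complex.I →
      (((A.1 1 0 * τ.re + A.1 1 1 +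
          ‖(A.1 1 0 : ℂ) * (τ : ℂ) + (A.1 1 1 : ℂ)‖ : ℝ) : ℂ)
        - (A.1 1 0 * τ.im : ℝ) * t) ≠ 0 →
      (tAct A τ t + Complex.I) / (tAct A τ t - Complex.I)
        = eFactor A τ * ((t + Complex.I) / (t - Complex.I))) ∧
    (∀ (A B : Matrix.SpecialLinearGroup (Fin 2) ℝ) (τ : UpperHalfPlane) (z : ℂ),
      ((A * B) • τ, eFactor (A * B) τ * z)
        = (A • (B • τ), eFactor A (B • τ) * (eFactor B τ * z))) := by
  refine ⟨eFactor_abs, eFactor_cocycle, ?_, ?_⟩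
  · intro A τ t ht hM
    set c : ℝ := A.1 1 0 with hc
    set d : ℝ := A.1 1 1 with hd
    set r : ℝ := ‖(c : ℂ) * (τ : ℂ) + (d : ℂ)‖ with hr
    set u : ℝ := c * τ.re + d with hu
    set E : ℝ := c * τ.im with hE
    have hτ : (τ : ℂ) = (τ.re : ℂ) + (τ.im : ℂ) * Complex.I := by
      conv_lhs => rw [← Complex.re_add_im (τ : ℂ)]
      norm_num [UpperHalfPlane.coe_re, UpperHalfPlane.coe_im]
    have hw : (c : ℂ) * (τ : ℂ) + (d : ℂ) = (u : ℂ) + (E : ℂ) * Complex.I := by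
      rw [hτ, hu, hE]
      push_cast
      ring
    have hwne : (c : ℂ) * (τ : ℂ) + (d : ℂ) ≠ 0 := by
      rw [← denom_sl]
      exact UpperHalfPlane.denom_ne_zero _ _
    have hrpos : 0 < r := by
      rw [hr]
      exact norm_pos_iff.mpr hwne
    have hrne : (r : ℂ) ≠ 0 := by
      exact_mod_cast hrpos.ne'
    have hr2 : (r : ℂ) ^ 2 = (u : ℂ) ^ 2 + (E : ℂ) ^ 2 := by
      have h0 : r ^ 2 = u ^ 2 + E ^ 2 := by
        rw [hr, Complex.sq_norm, hw, Complex.normSq_apply]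
        simp
        try ring
      exact_mod_cast h0
    have htact : tAct A τ t = ((E : ℂ) + ((u + r : ℝ) : ℂ) * t) /
        (((u + r : ℝ) : ℂ) - (E : ℂ) * t) := by
      rw [tAct]
    have hM' : (((u + r : ℝ) : ℂ)) - (E : ℂ) * t ≠ 0 := by
      convert hM using 2
    have hDE : (((u : ℂ)) + (r : ℂ)) + Complex.I * (E : ℂ) ≠ 0 := by
      intro h0
      have h1 : u + r = 0 := by
        have := congrArg Complex.re h0
        simpa using this
      have h2 : E = 0 := by
        have := congrArg Complex.im h0
        simpa using this
      apply hM'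
      rw [h1, h2]
      simp
    have hcd : (c : ℂ) * (starRingEnd ℂ) (τ : ℂ) + (d : ℂ)
        = (u : ℂ) - (E : ℂ) * Complex.I := by
      rw [hτ, hu, hE]
      push_cast
      rw [map_add, map_mul, Complex.conj_ofReal, Complex.conj_ofReal, Complex.conj_I]
      ring
    have key : ((((u : ℂ) + (r : ℂ))) - Complex.I * (E : ℂ)) /
        ((((u : ℂ) + (r : ℂ))) + Complex.I * (E : ℂ)) = eFactor A τ := by
      rw [cayley_key _ _ _ hr2 hrne hDE, eFactor, ← hc, ← hd, ← hr, hcd]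
    have step : (tAct A τ t + Complex.I) / (tAct A τ t - Complex.I)
        = (((E : ℂ) + ((u + r : ℝ) : ℂ) * t) + Complex.I * (((u + r : ℝ) : ℂ) - (E : ℂ) * t)) /
          (((E : ℂ) + ((u + r : ℝ) : ℂ) * t) - Complex.I * (((u + r : ℝ) : ℂ) - (E : ℂ) * t)) := by
      rw [htact, div_add' _ _ _ hM', div_sub' hM',
        mul_comm (((u + r : ℝ) : ℂ) - (E : ℂ) * t) Complex.I,
        div_div_div_cancel_right₀ hM']
    rw [step,
      show ((E : ℂ) + ((u + r : ℝ) : ℂ) * t) + Complex.I * (((u + r : ℝ) : ℂ) - (E : ℂ) * t)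
          = ((((u : ℂ) + (r : ℂ))) - Complex.I * (E : ℂ)) * (t + Complex.I) by
        push_cast
        linear_combination (E : ℂ) * Complex.I_sq,
      show ((E : ℂ) + ((u + r : ℝ) : ℂ) * t) - Complex.I * (((u + r : ℝ) : ℂ) - (E : ℂ) * t)
          = ((((u : ℂ) + (r : ℂ))) + Complex.I * (E : ℂ)) * (t - Complex.I) by
        push_cast
        linear_combination (E : ℂ) * Complex.I_sq,
      mul_div_mul_comm, key]
  · intro A B τ z
    simp only [Prod.mk.injEq]
    exact ⟨mul_smul A B τ, by rw [eFactor_cocycle A B τ]; ring⟩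

end
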